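/- For every positive integer n and real g₀ > 0, one has n! · ∏_{1 ≤ j < k ≤ n} [Γ((k−j+1)g₀)·Γ(1+(k−j−1)g₀)] / [Γ((k−j)g₀)·Γ(1+(k−j)g₀)] = Γ(1+ng₀) / Γ(1+g₀)^n. -/

import Mathlib

open Real Finset Nat

noncomputable def Tg (g₀ : ℝ) (d : ℕ) : ℝ :=
  (Real.Gamma (((d : ℝ) + 1) * g₀) * Real.Gamma (1 + ((d : ℝ) - 1) * g₀)) /
    (Real.Gamma ((d : ℝ) * g₀) * Real.Gamma (1 + (d : ℝ) * g₀))

lemma tele {g₀ : ℝ} (hg : 0 < g₀) (m : ℕ) :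
    ∏ d ∈ Finset.Ico 1 (m + 1), Tg g₀ d =
      Real.Gamma (((m : ℝ) + 1) * g₀) /
        (Real.Gamma g₀ * Real.Gamma (1 + (m : ℝ) * g₀)) := by
  induction m with
  | zero =>
      simp [Real.Gamma_one, Real.Gamma_pos_of_pos hg |>.ne', div_self]
  | succ m ih =>
      rw [Finset.prod_Ico_succ_top (by omega), ih, Tg]
      push_cast
      have h1 : (0:ℝ) < Real.Gamma g₀ := Real.Gamma_pos_of_pos hg
      have h2 : (0:ℝ) < Real.Gamma (1 + (m:ℝ) * g₀) :=
        Real.Gamma_pos_of_pos (by positivity)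
      have h3 : (0:ℝ) < Real.Gamma (((m:ℝ) + 1) * g₀) :=
        Real.Gamma_pos_of_pos (by positivity)
      have h4 : (0:ℝ) < Real.Gamma (1 + ((m:ℝ) + 1) * g₀) :=
        Real.Gamma_pos_of_pos (by positivity)
      have e1 : ((m:ℝ) + 1 - 1) = (m:ℝ) := by ring
      rw [e1]
      field_simp

lemma main_ind {g₀ : ℝ} (hg : 0 < g₀) (n : ℕ) :
    (n ! : ℝ) * ∏ j ∈ Finset.range n,
        Real.Gamma (((j : ℝ) + 1) * g₀) /
          (Real.Gamma g₀ * Real.Gamma (1 + (j : ℝ) * g₀)) =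
      Real.Gamma (1 + n * g₀) / (Real.Gamma (1 + g₀)) ^ n := by
  induction n with
  | zero => simp [Real.Gamma_one]
  | succ n ih =>
      rw [Finset.prod_range_succ]
      have h1 : (0:ℝ) < Real.Gamma g₀ := Real.Gamma_pos_of_pos hg
      have h2 : (0:ℝ) < Real.Gamma (1 + (n:ℝ) * g₀) :=
        Real.Gamma_pos_of_pos (by positivity)
      have h3 : (0:ℝ) < Real.Gamma (((n:ℝ) + 1) * g₀) :=
        Real.Gamma_pos_of_pos (by positivity)
      have hG1 : Real.Gamma (1 + g₀) = g₀ * Real.Gamma g₀ := by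
        rw [add_comm, Real.Gamma_add_one hg.ne']
      have hG2 : Real.Gamma (1 + ((n:ℕ)+1 : ℕ) * g₀) =
          (((n:ℝ)+1) * g₀) * Real.Gamma (((n:ℝ)+1) * g₀) := by
        push_cast
        rw [add_comm, Real.Gamma_add_one (by positivity)]
      have hfac : (0:ℝ) < (n ! : ℝ) := by exact_mod_cast n.factorial_pos
      have hP : (∏ j ∈ Finset.range n,
            Real.Gamma (((j : ℝ) + 1) * g₀) /
              (Real.Gamma g₀ * Real.Gamma (1 + (j : ℝ) * g₀))) =
          Real.Gamma (1 + (n:ℝ) * g₀) / (Real.Gamma (1 + g₀)) ^ n / (n ! : ℝ) := by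
        rw [eq_div_iff hfac.ne', mul_comm]
        exact ih
      push_cast [Nat.factorial_succ]
      push_cast at hG2
      rw [hP, hG2, hG1]
      field_simp
      ring

theorem stmt2 (n : ℕ) (hn : 0 < n) (g₀ : ℝ) (hg : 0 < g₀) :
    (n ! : ℝ) *
      ∏ j ∈ Finset.range n, ∏ k ∈ Finset.Ioo j n,
        (Real.Gamma ((((k - j : ℕ) : ℝ) + 1) * g₀) *
          Real.Gamma (1 + (((k - j : ℕ) : ℝ) - 1) * g₀)) /
        (Real.Gamma (((k - j : ℕ) : ℝ) * g₀) *
          Real.Gamma (1 + ((k - j : ℕ) : ℝ) * g₀)) =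
    Real.Gamma (1 + n * g₀) / (Real.Gamma (1 + g₀)) ^ n := by
  have inner : ∀ j : ℕ, ∏ k ∈ Finset.Ioo j n, Tg g₀ (k - j) =
      ∏ d ∈ Finset.Ico 1 (n - j), Tg g₀ d := by
    intro j
    refine Finset.prod_nbij' (fun k => k - j) (fun d => d + j) ?_ ?_ ?_ ?_ ?_
    · intro k hk; simp only [Finset.mem_Ioo, Finset.mem_Ico] at *; omega
    · intro d hd; simp only [Finset.mem_Ioo, Finset.mem_Ico] at *; omega
    · intro k hk; simp only [Finset.mem_Ioo] at hk; show k - j + j = k; omega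
    · intro d hd; simp only [Finset.mem_Ico] at hd; show d + j - j = d; omega
    · intro k hk; rfl
  have step1 : ∏ j ∈ Finset.range n, ∏ k ∈ Finset.Ioo j n,
        (Real.Gamma ((((k - j : ℕ) : ℝ) + 1) * g₀) *
          Real.Gamma (1 + (((k - j : ℕ) : ℝ) - 1) * g₀)) /
        (Real.Gamma (((k - j : ℕ) : ℝ) * g₀) *
          Real.Gamma (1 + ((k - j : ℕ) : ℝ) * g₀)) =
      ∏ j ∈ Finset.range n, ∏ d ∈ Finset.Ico 1 ((n - 1 - j) + 1), Tg g₀ d := by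
    refine Finset.prod_congr rfl fun j hj => ?_
    simp only [Finset.mem_range] at hj
    rw [show (n - 1 - j) + 1 = n - j by omega, ← inner j]
    rfl
  rw [step1]
  rw [Finset.prod_range_reflect (fun j => ∏ d ∈ Finset.Ico 1 (j + 1), Tg g₀ d) n]
  have step2 : ∀ j : ℕ, ∏ d ∈ Finset.Ico 1 (j + 1), Tg g₀ d =
      Real.Gamma (((j : ℝ) + 1) * g₀) /
        (Real.Gamma g₀ * Real.Gamma (1 + (j : ℝ) * g₀)) := fun j => tele hg j
  rw [Finset.prod_congr rfl fun j _ => step2 j]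
  exact main_ind hg n
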